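/- Assume there is a constant z ≥ 2 such that p_{n+1} - p_n = z for infinitely many n (a form of Zhang's theorem). Then there exist infinitely many n with p_n^(n+1) > p_{n+1}^n, i.e., Firoozbakht's inequality p_n^(1/n) > p_{n+1}^(1/(n+1)) holds for infinitely many n. -/

import Mathlib

/-- `p n` is the `n`-th prime number (`p 1 = 2`, `p 2 = 3`, ...). -/
noncomputable def p (n : ℕ) : ℕ := Nat.nth Nat.Prime (n - 1)

/-- `g n = p (n+1) - p n` is the `n`-th prime gap. -/
noncomputable def g (n : ℕ) : ℕ := p (n + 1) - p n

lemma nth_prime_ge (k : ℕ) : k + 2 ≤ Nat.nth Nat.Prime k := by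
  induction k with
  | zero =>
    have : Nat.Prime (Nat.nth Nat.Prime 0) := Nat.nth_mem_of_infinite Nat.infinite_setOf_prime 0
    have := this.two_le; omega
  | succ k ih =>
    have hlt : Nat.nth Nat.Prime k < Nat.nth Nat.Prime (k + 1) :=
      (Nat.nth_lt_nth Nat.infinite_setOf_prime).2 (Nat.lt_succ_self k)
    omega

lemma key_ineq (n pp z : ℕ) (hp : 2 ≤ pp) (hn : n ≤ pp) (hexp : Real.exp z < pp) :
    (pp + z) ^ n < pp ^ (n + 1) := by
  have hppos : (0 : ℝ) < pp := by positivity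
  have h1 : ((pp : ℝ) + z) ^ n ≤ (pp : ℝ) ^ n * Real.exp z := by
    have hz : (0 : ℝ) ≤ z := by positivity
    have hstep : (pp : ℝ) + z ≤ pp * Real.exp (z / pp) := by
      have := Real.add_one_le_exp ((z : ℝ) / pp)
      calc (pp : ℝ) + z = pp * (z / pp + 1) := by field_simp; ring
        _ ≤ pp * Real.exp (z / pp) := by
            apply mul_le_mul_of_nonneg_left this (le_of_lt hppos)
    calc ((pp : ℝ) + z) ^ n ≤ (pp * Real.exp (z / pp)) ^ n := by
          apply pow_le_pow_left₀ (by positivity) hstep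
      _ = (pp : ℝ) ^ n * Real.exp (z / pp) ^ n := by rw [mul_pow]
      _ = (pp : ℝ) ^ n * Real.exp (n * (z / pp)) := by
          rw [← Real.exp_nat_mul]
      _ ≤ (pp : ℝ) ^ n * Real.exp z := by
          apply mul_le_mul_of_nonneg_left _ (by positivity)
          apply Real.exp_le_exp.2
          calc (n : ℝ) * ((z:ℝ) / pp) ≤ pp * ((z:ℝ)/pp) := by
                apply mul_le_mul_of_nonneg_right (by exact_mod_cast hn) (by positivity)
            _ = z := by field_simp
  have h2 : ((pp : ℝ) + z) ^ n < (pp : ℝ) ^ (n + 1) := by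
    calc ((pp : ℝ) + z) ^ n ≤ (pp : ℝ) ^ n * Real.exp z := h1
      _ < (pp : ℝ) ^ n * pp := by
          apply mul_lt_mul_of_pos_left hexp (by positivity)
      _ = (pp : ℝ) ^ (n + 1) := by ring
  have := h2
  rw [show ((pp : ℝ) + z) = ((pp + z : ℕ) : ℝ) by push_cast; ring] at this
  exact_mod_cast this

theorem zhang_imp_firoozbakht_infinitely_often
    (h : ∃ z : ℕ, 2 ≤ z ∧ {n : ℕ | p (n + 1) - p n = z}.Infinite) :
    {n : ℕ | (p (n + 1)) ^ n < (p n) ^ (n + 1)}.Infinite := by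
  obtain ⟨z, hz2, hS⟩ := h
  set C : ℕ := ⌈Real.exp z⌉₊ with hC
  have hinf : ({n : ℕ | p (n + 1) - p n = z} \ Set.Iic (C + 1)).Infinite :=
    hS.diff (Set.finite_Iic _)
  apply hinf.mono
  rintro n ⟨hgap, hn⟩
  simp only [Set.mem_Iic, not_le] at hn
  have hn1 : 1 ≤ n := by omega
  -- p n ≥ n + 1
  have hpn : n + 1 ≤ p n := by
    have := nth_prime_ge (n - 1)
    unfold p
    omega
  have hp2 : 2 ≤ p n := by omega
  -- p (n+1) = p n + z
  have hmono : p n ≤ p (n + 1) := by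
    unfold p
    rcases Nat.eq_or_lt_of_le hn1 with h1 | h1
    · simp [← h1]
    · exact le_of_lt ((Nat.nth_lt_nth Nat.infinite_setOf_prime).2 (by omega))
  have hgap' : p (n + 1) - p n = z := hgap
  have heq : p (n + 1) = p n + z := by omega
  -- exp z < p n
  have hexp : Real.exp z < p n := by
    have h1 : Real.exp z ≤ C := Nat.le_ceil _
    have h2 : (C : ℝ) < p n := by exact_mod_cast (by omega : C < p n)
    linarith
  show (p (n + 1)) ^ n < (p n) ^ (n + 1)
  rw [heq]
  exact key_ineq n (p n) z hp2 (by omega) hexp
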